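/- Let λ, μ ∈ ℝ and let E = {F ∈ C^∞(ℝ^{1|2}) : ∂_2(F) = 0}, so that C^∞(ℝ^{1|2}) = E ⊕ θ_2E. For i, j ∈ {1, 2} let D_{ij} ⊂ D²_{λ,μ} be the subspace of differential operators that map the i-th summand (E for i = 1, θ_2E for i = 2) into the j-th summand and annihilate the other summand. Then D²_{λ,μ} = D_{11} ⊕ D_{22} ⊕ D_{12} ⊕ D_{21}, and each subspace D_{ij} is invariant under the osp(1|2)-action X_H·A = L^μ_{X_H}∘A − (−1)^{|H||A|} A∘L^λ_{X_H}, X_H ∈ osp(1|2). (This realizes the osp(1|2)-module decomposition D²_{λ,μ} ≅ D¹_{λ,μ} ⊕ D¹_{λ+1/2,μ+1/2} ⊕ Π(D¹_{λ,μ+1/2} ⊕ D¹_{λ+1/2,μ}).) -/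

import Mathlib

noncomputable section
open Function
open scoped ContDiff

def SmoothFn : Subalgebra ℝ (ℝ → ℝ) where
  carrier := {f | ContDiff ℝ ∞ f}
  mul_mem' := fun {a b} (hf : ContDiff ℝ ∞ a) (hg : ContDiff ℝ ∞ b) => hf.mul hg
  add_mem' := fun {a b} (hf : ContDiff ℝ ∞ a) (hg : ContDiff ℝ ∞ b) => hf.add hg
  algebraMap_mem' := fun c => (contDiff_const : ContDiff ℝ ∞ (fun _ : ℝ => c))

abbrev SF : Type := SmoothFn

theorem mem_SmoothFn {f : ℝ → ℝ} : f ∈ SmoothFn ↔ ContDiff ℝ ∞ f := ⟨fun h => h, fun h => h⟩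

def sderiv (f : SF) : SF :=
  ⟨deriv (f : ℝ → ℝ), mem_SmoothFn.mpr (contDiff_infty_iff_deriv.mp (mem_SmoothFn.mp f.2)).2⟩

def cx : SF := ⟨id, mem_SmoothFn.mpr contDiff_id⟩

/-- `C^∞(ℝ^{1|2})`: a superfunction `f₀ + f₁θ₁ + f₂θ₂ + f₁₂θ₁θ₂` is recorded by its four
smooth coefficients, indexed by `0 ↦ f₀`, `1 ↦ f₁`, `2 ↦ f₂`, `3 ↦ f₁₂`. -/
def S2 : Type := Fin 4 → SF

instance : AddCommGroup S2 := inferInstanceAs (AddCommGroup (Fin 4 → SF))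
instance : Module ℝ S2 := inferInstanceAs (Module ℝ (Fin 4 → SF))

namespace S2

@[simp] theorem add_apply (F G : S2) (i : Fin 4) : (F + G) i = F i + G i := rfl
@[simp] theorem sub_apply (F G : S2) (i : Fin 4) : (F - G) i = F i - G i := rfl
@[simp] theorem smul_apply (c : ℝ) (F : S2) (i : Fin 4) : (c • F) i = c • F i := rfl
@[simp] theorem zero_apply (i : Fin 4) : (0 : S2) i = 0 := rfl

/-- Supercommutative multiplication on `C^∞(ℝ^{1|2})`. -/
def mul (F G : S2) : S2 :=
  ![F 0 * G 0,
    F 0 * G 1 + F 1 * G 0,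
    F 0 * G 2 + F 2 * G 0,
    F 0 * G 3 + F 3 * G 0 + F 1 * G 2 - F 2 * G 1]

/-- The odd coordinate `θ₁`. -/
def θ1 : S2 := ![0, 1, 0, 0]
/-- The odd coordinate `θ₂`. -/
def θ2 : S2 := ![0, 0, 1, 0]
/-- The constant superfunction `1`. -/
def one2 : S2 := ![1, 0, 0, 0]
/-- The superfunction `x`. -/
def fx : S2 := ![cx, 0, 0, 0]
/-- The superfunction `x²`. -/
def fx2 : S2 := ![cx * cx, 0, 0, 0]
/-- The superfunction `xθ₁`. -/
def fxθ1 : S2 := ![0, cx, 0, 0]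
/-- The superfunction `xθ₂`. -/
def fxθ2 : S2 := ![0, 0, cx, 0]
/-- The superfunction `θ₁θ₂`. -/
def fθ12 : S2 := ![0, 0, 0, 1]

/-- The even derivative `∂ₓ`. -/
def dx (F : S2) : S2 := fun i => sderiv (F i)
/-- The odd (left) partial derivative `∂₁ = ∂/∂θ₁`. -/
def d1 (F : S2) : S2 := ![F 1, 0, F 3, 0]
/-- The odd (left) partial derivative `∂₂ = ∂/∂θ₂`. -/
def d2 (F : S2) : S2 := ![F 2, -F 3, 0, 0]
/-- The odd vector field `η̄₁ = ∂₁ − θ₁∂ₓ`. -/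
def eta1 (F : S2) : S2 := d1 F - mul θ1 (dx F)
/-- The odd vector field `η̄₂ = ∂₂ − θ₂∂ₓ`. -/
def eta2 (F : S2) : S2 := d2 F - mul θ2 (dx F)

/-- The even part `f₀ + f₁₂θ₁θ₂` of a superfunction. -/
def evenPart (F : S2) : S2 := ![F 0, 0, 0, F 3]
/-- The odd part `f₁θ₁ + f₂θ₂` of a superfunction. -/
def oddPart (F : S2) : S2 := ![0, F 1, F 2, 0]

/-- `F` is even (parity `0̄`). -/
def IsEven (F : S2) : Prop := F 1 = 0 ∧ F 2 = 0
/-- `F` is odd (parity `1̄`). -/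
def IsOdd (F : S2) : Prop := F 0 = 0 ∧ F 3 = 0
/-- `F` is homogeneous of parity `p` (`false` = even, `true` = odd). -/
def HasParity (F : S2) (p : Bool) : Prop := if p then IsOdd F else IsEven F

/-- The sign `(−1)^p`. -/
def sgn (p : Bool) : ℝ := if p then -1 else 1

/-- The contact vector field `X_F` applied to `G`; for homogeneous `F` this is
`F∂ₓ(G) − ½(−1)^{|F|}(η̄₁(F)η̄₁(G) + η̄₂(F)η̄₂(G))`, extended linearly in `F`. -/
def X (F G : S2) : S2 :=
  mul F (dx G)
    - (1 / 2 : ℝ) • (mul (eta1 (evenPart F)) (eta1 G) + mul (eta2 (evenPart F)) (eta2 G))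
    + (1 / 2 : ℝ) • (mul (eta1 (oddPart F)) (eta1 G) + mul (eta2 (oddPart F)) (eta2 G))

/-- The contact bracket `{F,G} = FG' − F'G − ½(−1)^{|F|}(η̄₁(F)η̄₁(G) + η̄₂(F)η̄₂(G))`
(for homogeneous `F`, extended linearly), so `[X_F, X_G] = X_{{F,G}}`. -/
def cbr (F G : S2) : S2 := X F G - mul (dx F) G

/-- The action `L^λ_{X_H}(G) = X_H(G) + λ H' G` of `X_H` on `λ`-densities `F²_λ`. -/
def Lact (lam : ℝ) (H G : S2) : S2 := X H G + lam • mul (dx H) G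

/-- `osp(2|2)`, realized as the span of the contact Hamiltonians
`1, x, x², xθ₁, xθ₂, θ₁, θ₂, θ₁θ₂` (identifying `X_F ↔ F`). -/
def osp22 : Submodule ℝ S2 :=
  Submodule.span ℝ {one2, fx, fx2, fxθ1, fxθ2, θ1, θ2, fθ12}

/-- `osp(1|2) ⊂ osp(2|2)`: the span of `1, x, x², xθ₁, θ₁`. -/
def osp12 : Submodule ℝ S2 :=
  Submodule.span ℝ {one2, fx, fx2, fxθ1, θ1}

/-- A linear differential operator `F²_λ → F²_μ`:
`A(F) = Σ_{ℓ,m} a_{ℓ,m} η̄₁^ℓ η̄₂^m (F)` with smooth coefficients. -/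
def IsDiffOp (A : S2 → S2) : Prop :=
  ∃ (N : ℕ) (a : Fin (N + 1) → Fin (N + 1) → S2),
    ∀ F, A F = ∑ l : Fin (N + 1), ∑ m : Fin (N + 1),
      mul (a l m) (eta1^[(l : ℕ)] (eta2^[(m : ℕ)] F))

/-- The action of `X_H` (`H` homogeneous of parity `pH`) on a homogeneous operator `A`
of parity `pA`: `X_H·A = L^μ_{X_H} ∘ A − (−1)^{|H||A|} A ∘ L^λ_{X_H}`. -/
def opAct (lam mu : ℝ) (pH pA : Bool) (H : S2) (A : S2 → S2) : S2 → S2 :=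
  fun F => Lact mu H (A F) - sgn (pH && pA) • A (Lact lam H F)

/-- An operator is homogeneous of parity `p` if it shifts the parity of homogeneous
superfunctions by `p`. -/
def OpParity (A : S2 → S2) (p : Bool) : Prop :=
  ∀ (F : S2) (q : Bool), HasParity F q → HasParity (A F) (xor p q)


/-- A `1`-cochain of `osp(2|2)` with values in `D²_{λ,μ}`, recorded as a map defined on all
contact Hamiltonians; it represents a cochain through its restriction to `osp22`,
`Υ(X_G) = U G`. -/
abbrev Cochain := S2 → (S2 → S2)

/-- A cochain takes values in differential operators (on `osp(2|2)`). -/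
def DiffValued (U : Cochain) : Prop := ∀ F ∈ osp22, IsDiffOp (U F)

/-- The `1`-cocycle condition for a homogeneous cochain `U` of parity `pU`:
`Υ([X_F,X_G]) = (−1)^{|F||Υ|} X_F·Υ(X_G) − (−1)^{|G|(|F|+|Υ|)} X_G·Υ(X_F)`
for all homogeneous `X_F, X_G ∈ osp(2|2)`. -/
def IsCocycle (lam mu : ℝ) (pU : Bool) (U : Cochain) : Prop :=
  ∀ F G : S2, F ∈ osp22 → G ∈ osp22 →
    ∀ pF pG : Bool, HasParity F pF → HasParity G pG →
      U (cbr F G) =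
        sgn (pF && pU) • opAct lam mu pF (xor pU pG) F (U G)
          - sgn (pG && xor pF pU) • opAct lam mu pG (xor pU pF) G (U F)

/-- `U` is a coboundary of parity `pU`: there is `A ∈ D²_{λ,μ}` of parity `pU` with
`Υ(X_F) = (−1)^{|F||A|} X_F·A` for all `X_F ∈ osp(2|2)`. -/
def IsCoboundary (lam mu : ℝ) (pU : Bool) (U : Cochain) : Prop :=
  ∃ A : S2 → S2, IsDiffOp A ∧ OpParity A pU ∧
    ∀ F ∈ osp22, ∀ pF : Bool, HasParity F pF →
      U F = sgn (pF && pU) • opAct lam mu pF pU F A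

/-- `U` is a coboundary (of some homogeneous `A ∈ D²_{λ,μ}`). -/
def IsCoboundaryAny (lam mu : ℝ) (U : Cochain) : Prop :=
  ∃ pU : Bool, IsCoboundary lam mu pU U

/-- An `osp(1|2)`-relative `1`-cocycle: a `1`-cocycle vanishing on `osp(1|2)`. -/
def IsRelCocycle (lam mu : ℝ) (pU : Bool) (U : Cochain) : Prop :=
  IsCocycle lam mu pU U ∧ ∀ F ∈ osp12, U F = 0

/-- `A ∈ D²_{λ,μ}` (of parity `pA`) is `osp(1|2)`-invariant: `X_H·A = 0` for all
`X_H ∈ osp(1|2)`. -/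
def IsInvariantOp (lam mu : ℝ) (pA : Bool) (A : S2 → S2) : Prop :=
  ∀ H ∈ osp12, ∀ pH : Bool, HasParity H pH → opAct lam mu pH pA H A = 0

/-- `U` is an `osp(1|2)`-relative coboundary of parity `pU`: `Υ = δA` with `A` an
`osp(1|2)`-invariant homogeneous element of `D²_{λ,μ}`. -/
def IsRelCoboundary (lam mu : ℝ) (pU : Bool) (U : Cochain) : Prop :=
  ∃ A : S2 → S2, IsDiffOp A ∧ OpParity A pU ∧ IsInvariantOp lam mu pU A ∧
    ∀ F ∈ osp22, ∀ pF : Bool, HasParity F pF →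
      U F = sgn (pF && pU) • opAct lam mu pF pU F A

/-- `U` is a relative coboundary (of some homogeneous invariant `A`). -/
def IsRelCoboundaryAny (lam mu : ℝ) (U : Cochain) : Prop :=
  ∃ pU : Bool, IsRelCoboundary lam mu pU U

/-! ### The explicit nontrivial cocycles -/

/-- `Υ_{λ,λ}(X_G) : F ↦ G′·F`. -/
def U1 : Cochain := fun G F => mul (dx G) F

/-- `Υ̃_{0,0}(X_G) : F ↦ η̄₁η̄₂(G)·F`. -/
def Ut0 : Cochain := fun G F => mul (eta1 (eta2 G)) F

/-- `Υ̃_{λ,λ}(X_G) : F ↦ 2λ η̄₁(∂₂G)·F − (−1)^{|G|}(∂₂(G)·η̄₁(F) + θ₂·η̄₂η̄₁(G)·η̄₂(F))`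
(for `λ ≠ 0`), the sign `(−1)^{|G|}` being realized by the even/odd splitting of `G`. -/
def Ut (lam : ℝ) : Cochain := fun G F =>
  (2 * lam) • mul (eta1 (d2 G)) F
    - (mul (d2 (evenPart G)) (eta1 F) + mul (mul θ2 (eta2 (eta1 (evenPart G)))) (eta2 F))
    + (mul (d2 (oddPart G)) (eta1 F) + mul (mul θ2 (eta2 (eta1 (oddPart G)))) (eta2 F))

/-- `Υ̃_{λ,λ}` for general `λ` (with the special value at `λ = 0`). -/
def Ut' (lam : ℝ) : Cochain := if lam = 0 then Ut0 else Ut lam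

/-- `Υ_{−k/2,k/2}(X_G) : F ↦ G′·η̄₁η̄₂^{2k−1}(F)`. -/
def Uk (k : ℕ) : Cochain := fun G F => mul (dx G) (eta1 (eta2^[2 * k - 1] F))

/-- `Υ̃_{−k/2,k/2}(X_G) :
F ↦ k η̄₁(∂₂G)·η̄₁η̄₂^{2k−1}(F) − (−1)^{|G|}(∂₂(G)·η̄₂^{2k+1}(F) − η̄₁(θ₂∂₂(G))·η̄₁^{2k+1}(F))`. -/
def Utk (k : ℕ) : Cochain := fun G F =>
  (k : ℝ) • mul (eta1 (d2 G)) (eta1 (eta2^[2 * k - 1] F))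
    - (mul (d2 (evenPart G)) (eta2^[2 * k + 1] F)
        - mul (eta1 (mul θ2 (d2 (evenPart G)))) (eta1^[2 * k + 1] F))
    + (mul (d2 (oddPart G)) (eta2^[2 * k + 1] F)
        - mul (eta1 (mul θ2 (d2 (oddPart G)))) (eta1^[2 * k + 1] F))

/-- `Ῡ_{−k/2,k/2}(X_G) :
F ↦ (k−1) G″·η̄₁η̄₂^{2k−3}(F) + (−1)^{|G|}(η̄₂(G′)·η̄₁^{2k−1}(F) − η̄₁(G′)·η̄₂^{2k−1}(F))`. -/
def Ub (k : ℕ) : Cochain := fun G F =>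
  ((k : ℝ) - 1) • mul (dx (dx G)) (eta1 (eta2^[2 * k - 3] F))
    + (mul (eta2 (dx (evenPart G))) (eta1^[2 * k - 1] F)
        - mul (eta1 (dx (evenPart G))) (eta2^[2 * k - 1] F))
    - (mul (eta2 (dx (oddPart G))) (eta1^[2 * k - 1] F)
        - mul (eta1 (dx (oddPart G))) (eta2^[2 * k - 1] F))

/-! ### The action on possibly inhomogeneous operators -/

/-- The even part of an operator. -/
def opEven (A : S2 → S2) : S2 → S2 :=
  fun F => evenPart (A (evenPart F)) + oddPart (A (oddPart F))

/-- The odd part of an operator. -/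
def opOdd (A : S2 → S2) : S2 → S2 :=
  fun F => oddPart (A (evenPart F)) + evenPart (A (oddPart F))

/-- The action `X_H·A` of a homogeneous `X_H` on a possibly inhomogeneous operator `A`,
extending `opAct` by linearity in `A` via its parity decomposition. -/
def opActG (lam mu : ℝ) (pH : Bool) (H : S2) (A : S2 → S2) : S2 → S2 :=
  fun F => Lact mu H (A F)
    - (opEven A (Lact lam H F) + sgn pH • opOdd A (Lact lam H F))

/-- The coboundary `δA` of a homogeneous operator `A` of parity `pA`, as a cochain:
`δA(X_F) = (−1)^{|F||A|} X_F·A`, extended linearly in `F`. -/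
def cobdMap (lam mu : ℝ) (pA : Bool) (A : S2 → S2) : Cochain := fun F =>
  opAct lam mu false pA (evenPart F) A
    + sgn pA • opAct lam mu true pA (oddPart F) A

/-- A differential operator with constant coefficients. -/
def IsConstCoeffOp (A : S2 → S2) : Prop :=
  ∃ (N : ℕ) (a : Fin (N + 1) → Fin (N + 1) → Fin 4 → ℝ),
    ∀ F, A F = ∑ l : Fin (N + 1), ∑ m : Fin (N + 1),
      mul (fun i => algebraMap ℝ SF (a l m i)) (eta1^[(l : ℕ)] (eta2^[(m : ℕ)] F))

theorem ext4 {a b : S2} (h0 : a 0 = b 0) (h1 : a 1 = b 1) (h2 : a 2 = b 2)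
    (h3 : a 3 = b 3) : a = b := by
  funext i; fin_cases i; exacts [h0, h1, h2, h3]

@[simp] theorem mul_apply0 (a b : S2) : mul a b 0 = a 0 * b 0 := rfl
@[simp] theorem mul_apply1 (a b : S2) : mul a b 1 = a 0 * b 1 + a 1 * b 0 := rfl
@[simp] theorem mul_apply2 (a b : S2) : mul a b 2 = a 0 * b 2 + a 2 * b 0 := rfl
@[simp] theorem mul_apply3 (a b : S2) : mul a b 3 = a 0 * b 3 + a 3 * b 0 + a 1 * b 2 - a 2 * b 1 := rfl
@[simp] theorem d2_apply0 (a : S2) : d2 a 0 = a 2 := rfl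
@[simp] theorem d2_apply1 (a : S2) : d2 a 1 = -a 3 := rfl
@[simp] theorem d2_apply2 (a : S2) : d2 a 2 = 0 := rfl
@[simp] theorem d2_apply3 (a : S2) : d2 a 3 = 0 := rfl

theorem d2_add (a b : S2) : d2 (a + b) = d2 a + d2 b := by
  apply ext4 <;> simp <;> abel

theorem d2_smul (c : ℝ) (a : S2) : d2 (c • a) = c • d2 a := by
  apply ext4 <;> simp

theorem d2_zero : d2 (0 : S2) = 0 := by
  apply ext4 <;> simp

theorem mul_zero_right (a : S2) : mul a 0 = 0 := by
  apply ext4 <;> (simp only [mul_apply0, mul_apply1, mul_apply2, mul_apply3, zero_apply]; ring)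

theorem mul_add_right (a b c : S2) : mul a (b + c) = mul a b + mul a c := by
  apply ext4 <;>
    (simp only [mul_apply0, mul_apply1, mul_apply2, mul_apply3, add_apply]; ring)

theorem mul_smul_right (r : ℝ) (a b : S2) : mul a (r • b) = r • mul a b := by
  apply ext4 <;>
    simp [mul_smul_comm, smul_add, smul_sub]


/-- `E = {F ∈ C^∞(ℝ^{1|2}) : ∂₂F = 0}`, the first summand of `C^∞(ℝ^{1|2}) = E ⊕ θ₂E`. -/
def Esub : Submodule ℝ S2 where
  carrier := {F | d2 F = 0}
  add_mem' := by
    intro a b ha hb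
    simp only [Set.mem_setOf_eq] at *
    rw [d2_add, ha, hb, add_zero]
  zero_mem' := by simp only [Set.mem_setOf_eq]; exact d2_zero
  smul_mem' := by
    intro c a ha
    simp only [Set.mem_setOf_eq] at *
    rw [d2_smul, ha, smul_zero]

/-- `θ₂E`, the second summand of `C^∞(ℝ^{1|2}) = E ⊕ θ₂E`. -/
def θ2Esub : Submodule ℝ S2 where
  carrier := {F | ∃ G ∈ Esub, F = mul θ2 G}
  add_mem' := by
    rintro a b ⟨Ga, hGa, rfl⟩ ⟨Gb, hGb, rfl⟩
    exact ⟨Ga + Gb, Esub.add_mem hGa hGb, (mul_add_right _ _ _).symm⟩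
  zero_mem' := ⟨0, Esub.zero_mem, (mul_zero_right _).symm⟩
  smul_mem' := by
    rintro c a ⟨Ga, hGa, rfl⟩
    exact ⟨c • Ga, Esub.smul_mem c hGa, (mul_smul_right _ _ _).symm⟩

/-- `A ∈ D_{ij}`: the differential operators mapping the `i`-th summand of
`C^∞(ℝ^{1|2}) = E ⊕ θ₂E` into the `j`-th summand and annihilating the other summand
(indices: `0 ↦ E`, `1 ↦ θ₂E`). -/
def InD (i j : Fin 2) (A : S2 → S2) : Prop :=
  IsDiffOp A ∧
    (∀ F ∈ (if i = 0 then Esub else θ2Esub), A F ∈ (if j = 0 then Esub else θ2Esub)) ∧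
    (∀ F ∈ (if i = 0 then θ2Esub else Esub), A F = 0)

end S2
set_option synthInstance.maxHeartbeats 1000000
set_option maxHeartbeats 1000000

namespace S2

/-! ### SF lemmas -/

theorem sfext {f g : SF} (h : (f : ℝ → ℝ) = g) : f = g := Subtype.ext h

theorem sfdiff (f : SF) : Differentiable ℝ (f : ℝ → ℝ) :=
  (mem_SmoothFn.mp f.2).differentiable (by simp)

@[simp] theorem sderiv_coe (f : SF) : ((sderiv f : SF) : ℝ → ℝ) = deriv (f : ℝ → ℝ) := rfl

@[simp] theorem sderiv_add (f g : SF) : sderiv (f + g) = sderiv f + sderiv g := by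
  apply sfext; funext x
  show deriv (fun y => (f:ℝ→ℝ) y + (g:ℝ→ℝ) y) x = _
  rw [deriv_fun_add (sfdiff f x) (sfdiff g x)]; rfl

@[simp] theorem sderiv_neg (f : SF) : sderiv (-f) = -sderiv f := by
  apply sfext; funext x
  show deriv (fun y => -(f:ℝ→ℝ) y) x = _
  rw [deriv.fun_neg]; rfl

@[simp] theorem sderiv_sub (f g : SF) : sderiv (f - g) = sderiv f - sderiv g := by
  rw [sub_eq_add_neg, sderiv_add, sderiv_neg, ← sub_eq_add_neg]

@[simp] theorem sderiv_smul (c : ℝ) (f : SF) : sderiv (c • f) = c • sderiv f := by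
  apply sfext; funext x
  show deriv (fun y => c • (f:ℝ→ℝ) y) x = _
  rw [deriv_fun_const_smul c (sfdiff f x)]; rfl

@[simp] theorem sderiv_zero : sderiv (0 : SF) = 0 := by
  apply sfext; funext x
  show deriv (fun _ => (0:ℝ)) x = _
  simp

theorem sderiv_mul (f g : SF) : sderiv (f * g) = sderiv f * g + f * sderiv g := by
  apply sfext; funext x
  show deriv (fun y => (f:ℝ→ℝ) y * (g:ℝ→ℝ) y) x = _
  rw [deriv_fun_mul (sfdiff f x) (sfdiff g x)]; rfl

end S2
namespace S2

/-! ### Component lemmas -/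

@[simp] theorem neg_apply (F : S2) (i : Fin 4) : (-F) i = -(F i) := rfl
@[simp] theorem dx_apply (F : S2) (i : Fin 4) : dx F i = sderiv (F i) := rfl

@[simp] theorem d1_apply0 (F : S2) : d1 F 0 = F 1 := rfl
@[simp] theorem d1_apply1 (F : S2) : d1 F 1 = 0 := rfl
@[simp] theorem d1_apply2 (F : S2) : d1 F 2 = F 3 := rfl
@[simp] theorem d1_apply3 (F : S2) : d1 F 3 = 0 := rfl

@[simp] theorem θ1_apply0 : θ1 0 = 0 := rfl
@[simp] theorem θ1_apply1 : (θ1 1 : SF) = 1 := rfl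
@[simp] theorem θ1_apply2 : θ1 2 = 0 := rfl
@[simp] theorem θ1_apply3 : θ1 3 = 0 := rfl
@[simp] theorem θ2_apply0 : θ2 0 = 0 := rfl
@[simp] theorem θ2_apply1 : θ2 1 = 0 := rfl
@[simp] theorem θ2_apply2 : (θ2 2 : SF) = 1 := rfl
@[simp] theorem θ2_apply3 : θ2 3 = 0 := rfl
@[simp] theorem one2_apply0 : (one2 0 : SF) = 1 := rfl
@[simp] theorem one2_apply1 : one2 1 = 0 := rfl
@[simp] theorem one2_apply2 : one2 2 = 0 := rfl
@[simp] theorem one2_apply3 : one2 3 = 0 := rfl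
@[simp] theorem fθ12_apply0 : fθ12 0 = 0 := rfl
@[simp] theorem fθ12_apply1 : fθ12 1 = 0 := rfl
@[simp] theorem fθ12_apply2 : fθ12 2 = 0 := rfl
@[simp] theorem fθ12_apply3 : (fθ12 3 : SF) = 1 := rfl

@[simp] theorem evenPart_apply0 (F : S2) : evenPart F 0 = F 0 := rfl
@[simp] theorem evenPart_apply1 (F : S2) : evenPart F 1 = 0 := rfl
@[simp] theorem evenPart_apply2 (F : S2) : evenPart F 2 = 0 := rfl
@[simp] theorem evenPart_apply3 (F : S2) : evenPart F 3 = F 3 := rfl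
@[simp] theorem oddPart_apply0 (F : S2) : oddPart F 0 = 0 := rfl
@[simp] theorem oddPart_apply1 (F : S2) : oddPart F 1 = F 1 := rfl
@[simp] theorem oddPart_apply2 (F : S2) : oddPart F 2 = F 2 := rfl
@[simp] theorem oddPart_apply3 (F : S2) : oddPart F 3 = 0 := rfl

@[simp] theorem eta1_apply0 (F : S2) : eta1 F 0 = F 1 := by
  rw [eta1, sub_apply]; simp [d1, θ1, dx, mul]
@[simp] theorem eta1_apply1 (F : S2) : eta1 F 1 = -sderiv (F 0) := by
  rw [eta1, sub_apply]; simp [d1, θ1, dx, mul]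
@[simp] theorem eta1_apply2 (F : S2) : eta1 F 2 = F 3 := by
  rw [eta1, sub_apply]; simp [d1, θ1, dx, mul]
@[simp] theorem eta1_apply3 (F : S2) : eta1 F 3 = -sderiv (F 2) := by
  rw [eta1, sub_apply]; simp [d1, θ1, dx, mul]
@[simp] theorem eta2_apply0 (F : S2) : eta2 F 0 = F 2 := by
  rw [eta2, sub_apply]; simp [d2, θ2, dx, mul]
@[simp] theorem eta2_apply1 (F : S2) : eta2 F 1 = -(F 3) := by
  rw [eta2, sub_apply]; simp [d2, θ2, dx, mul]
@[simp] theorem eta2_apply2 (F : S2) : eta2 F 2 = -sderiv (F 0) := by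
  rw [eta2, sub_apply]; simp [d2, θ2, dx, mul]
@[simp] theorem eta2_apply3 (F : S2) : eta2 F 3 = sderiv (F 1) := by
  rw [eta2, sub_apply]; simp [d2, θ2, dx, mul]

/-! ### Algebra lemmas -/

theorem mul_one_left (F : S2) : mul one2 F = F := by
  apply ext4 <;> simp

theorem mul_assoc' (a b c : S2) : mul (mul a b) c = mul a (mul b c) := by
  apply ext4 <;> (simp only [mul_apply0, mul_apply1, mul_apply2, mul_apply3]; ring)

theorem mul_zero_left (F : S2) : mul 0 F = 0 := by
  apply ext4 <;> (simp only [mul_apply0, mul_apply1, mul_apply2, mul_apply3, zero_apply]; ring)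

theorem mul_add_left (a b c : S2) : mul (a + b) c = mul a c + mul b c := by
  apply ext4 <;> (simp only [mul_apply0, mul_apply1, mul_apply2, mul_apply3, add_apply]; ring)

theorem mul_neg_left (a b : S2) : mul (-a) b = -(mul a b) := by
  apply ext4 <;> (simp only [mul_apply0, mul_apply1, mul_apply2, mul_apply3, neg_apply]; ring)

theorem mul_neg_right (a b : S2) : mul a (-b) = -(mul a b) := by
  apply ext4 <;> (simp only [mul_apply0, mul_apply1, mul_apply2, mul_apply3, neg_apply]; ring)

theorem mul_smul_left (r : ℝ) (a b : S2) : mul (r • a) b = r • mul a b := by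
  apply ext4 <;> simp [smul_mul_assoc, mul_smul_comm, smul_add, smul_sub]

theorem eta1_add (F G : S2) : eta1 (F + G) = eta1 F + eta1 G := by
  apply ext4 <;> simp <;> ring

theorem eta2_add (F G : S2) : eta2 (F + G) = eta2 F + eta2 G := by
  apply ext4 <;> simp <;> ring

theorem eta1_smul (r : ℝ) (F : S2) : eta1 (r • F) = r • eta1 F := by
  apply ext4 <;> simp

theorem eta2_smul (r : ℝ) (F : S2) : eta2 (r • F) = r • eta2 F := by
  apply ext4 <;> simp

theorem eta1_neg (F : S2) : eta1 (-F) = -eta1 F := by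
  apply ext4 <;> simp

theorem eta2_neg (F : S2) : eta2 (-F) = -eta2 F := by
  apply ext4 <;> simp

theorem eta1_zero : eta1 (0 : S2) = 0 := by
  apply ext4 <;> simp

theorem eta2_zero : eta2 (0 : S2) = 0 := by
  apply ext4 <;> simp

theorem eta2_eta2 (F : S2) : eta2 (eta2 F) = -(dx F) := by
  apply ext4 <;> simp

theorem eta2_eta1 (F : S2) : eta2 (eta1 F) = -(eta1 (eta2 F)) := by
  apply ext4 <;> simp

/-- The sign involution `a ↦ (-1)^{|a|}a`. -/
def pr (a : S2) : S2 := evenPart a - oddPart a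

@[simp] theorem pr_apply0 (a : S2) : pr a 0 = a 0 := by simp [pr]
@[simp] theorem pr_apply1 (a : S2) : pr a 1 = -(a 1) := by simp [pr]
@[simp] theorem pr_apply2 (a : S2) : pr a 2 = -(a 2) := by simp [pr]
@[simp] theorem pr_apply3 (a : S2) : pr a 3 = a 3 := by simp [pr]

theorem eta1_mul (a b : S2) :
    eta1 (mul a b) = mul (eta1 a) b + mul (pr a) (eta1 b) := by
  apply ext4 <;> (simp [sderiv_mul]; ring)

theorem eta2_mul (a b : S2) :
    eta2 (mul a b) = mul (eta2 a) b + mul (pr a) (eta2 b) := by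
  apply ext4 <;> (simp [sderiv_mul]; ring)

end S2
namespace S2

/-! ### Normal form monomials and the `DOp` predicate -/

/-- The normal-form monomial `η̄₁^{p.1} η̄₂^{p.2}`. -/
def NF (p : ℕ × ℕ) (F : S2) : S2 := eta1^[p.1] (eta2^[p.2] F)

/-- Finset-indexed form of `IsDiffOp`. -/
def DOp (A : S2 → S2) : Prop :=
  ∃ (s : Finset (ℕ × ℕ)) (c : ℕ × ℕ → S2), ∀ F, A F = ∑ p ∈ s, mul (c p) (NF p F)

theorem eta1_iter_add (n : ℕ) (F G : S2) :
    eta1^[n] (F + G) = eta1^[n] F + eta1^[n] G := by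
  induction n with
  | zero => simp
  | succ n ih => simp only [Function.iterate_succ_apply', ih, eta1_add]

theorem eta2_iter_add (n : ℕ) (F G : S2) :
    eta2^[n] (F + G) = eta2^[n] F + eta2^[n] G := by
  induction n with
  | zero => simp
  | succ n ih => simp only [Function.iterate_succ_apply', ih, eta2_add]

theorem eta1_iter_smul (n : ℕ) (r : ℝ) (F : S2) :
    eta1^[n] (r • F) = r • eta1^[n] F := by
  induction n with
  | zero => simp
  | succ n ih => simp only [Function.iterate_succ_apply', ih, eta1_smul]

theorem eta2_iter_smul (n : ℕ) (r : ℝ) (F : S2) :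
    eta2^[n] (r • F) = r • eta2^[n] F := by
  induction n with
  | zero => simp
  | succ n ih => simp only [Function.iterate_succ_apply', ih, eta2_smul]

theorem eta1_iter_zero (n : ℕ) : eta1^[n] (0 : S2) = 0 := by
  induction n with
  | zero => simp
  | succ n ih => simp only [Function.iterate_succ_apply', ih, eta1_zero]

theorem eta2_iter_zero (n : ℕ) : eta2^[n] (0 : S2) = 0 := by
  induction n with
  | zero => simp
  | succ n ih => simp only [Function.iterate_succ_apply', ih, eta2_zero]

theorem NF_add (p : ℕ × ℕ) (F G : S2) : NF p (F + G) = NF p F + NF p G := by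
  simp [NF, eta2_iter_add, eta1_iter_add]

theorem NF_smul (p : ℕ × ℕ) (r : ℝ) (F : S2) : NF p (r • F) = r • NF p F := by
  simp [NF, eta2_iter_smul, eta1_iter_smul]

theorem NF_zero (p : ℕ × ℕ) : NF p (0 : S2) = 0 := by
  simp [NF, eta2_iter_zero, eta1_iter_zero]

/-- `eta1` as an additive monoid hom. -/
def eta1Hom : S2 →+ S2 := AddMonoidHom.mk' eta1 eta1_add
/-- `eta2` as an additive monoid hom. -/
def eta2Hom : S2 →+ S2 := AddMonoidHom.mk' eta2 eta2_add
/-- left multiplication as an additive monoid hom. -/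
def mulHom (b : S2) : S2 →+ S2 := AddMonoidHom.mk' (mul b) (mul_add_right b)

theorem eta1_sum {ι : Type*} (u : Finset ι) (g : ι → S2) :
    eta1 (∑ i ∈ u, g i) = ∑ i ∈ u, eta1 (g i) := map_sum eta1Hom g u

theorem eta2_sum {ι : Type*} (u : Finset ι) (g : ι → S2) :
    eta2 (∑ i ∈ u, g i) = ∑ i ∈ u, eta2 (g i) := map_sum eta2Hom g u

theorem mul_sum_right {ι : Type*} (b : S2) (u : Finset ι) (g : ι → S2) :
    mul b (∑ i ∈ u, g i) = ∑ i ∈ u, mul b (g i) := map_sum (mulHom b) g u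

theorem eta2_eta1_iter (n : ℕ) (G : S2) :
    eta2 (eta1^[n] G) = ((-1 : ℝ) ^ n) • eta1^[n] (eta2 G) := by
  induction n with
  | zero => simp
  | succ n ih =>
      rw [Function.iterate_succ_apply', eta2_eta1, ih, eta1_smul,
        ← Function.iterate_succ_apply' eta1 n (eta2 G)]
      rw [pow_succ]
      module

theorem eta2_NF (p : ℕ × ℕ) (F : S2) :
    eta2 (NF p F) = ((-1 : ℝ) ^ p.1) • NF (p.1, p.2 + 1) F := by
  rw [NF, eta2_eta1_iter]
  show _ = ((-1 : ℝ) ^ p.1) • eta1^[p.1] (eta2^[p.2 + 1] F)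
  rw [← Function.iterate_succ_apply' eta2 p.2 F]

theorem eta1_NF (p : ℕ × ℕ) (F : S2) :
    eta1 (NF p F) = NF (p.1 + 1, p.2) F := by
  show _ = eta1^[p.1 + 1] (eta2^[p.2] F)
  rw [Function.iterate_succ_apply' eta1 p.1]
  rfl

theorem dop_congr {A B : S2 → S2} (h : ∀ F, A F = B F) (hB : DOp B) : DOp A := by
  obtain ⟨s, c, hc⟩ := hB
  exact ⟨s, c, fun F => (h F).trans (hc F)⟩

theorem dop_zero : DOp (fun _ => (0 : S2)) :=
  ⟨∅, fun _ => 0, fun F => by simp⟩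

theorem dop_gen (a : S2) (p : ℕ × ℕ) : DOp (fun F => mul a (NF p F)) :=
  ⟨{p}, fun _ => a, fun F => by simp⟩

theorem dop_id : DOp (fun F => F) :=
  dop_congr (fun F => (mul_one_left F).symm) (dop_gen one2 (0, 0))

theorem dop_add {A B : S2 → S2} (hA : DOp A) (hB : DOp B) :
    DOp (fun F => A F + B F) := by
  obtain ⟨s, c, hc⟩ := hA
  obtain ⟨t, d, hd⟩ := hB
  refine ⟨s ∪ t, fun p => (if p ∈ s then c p else 0) + (if p ∈ t then d p else 0),
    fun F => ?_⟩
  have h1 : ∀ (u : Finset (ℕ × ℕ)) (e : ℕ × ℕ → S2), u ⊆ s ∪ t →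
      (∑ p ∈ u, mul (e p) (NF p F)) =
        ∑ p ∈ s ∪ t, mul (if p ∈ u then e p else 0) (NF p F) := by
    intro u e hu
    rw [← Finset.sum_subset hu (fun p _ hpu => by rw [if_neg hpu, mul_zero_left])]
    exact Finset.sum_congr rfl fun p hp => by rw [if_pos hp]
  show A F + B F = _
  rw [hc, hd, h1 s c Finset.subset_union_left, h1 t d Finset.subset_union_right,
    ← Finset.sum_add_distrib]
  exact Finset.sum_congr rfl fun p _ => (mul_add_left _ _ _).symm

theorem dop_smul {A : S2 → S2} (r : ℝ) (hA : DOp A) : DOp (fun F => r • A F) := by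
  obtain ⟨s, c, hc⟩ := hA
  refine ⟨s, fun p => r • c p, fun F => ?_⟩
  show r • A F = _
  rw [hc, Finset.smul_sum]
  exact Finset.sum_congr rfl fun p _ => (mul_smul_left r _ _).symm

theorem dop_neg {A : S2 → S2} (hA : DOp A) : DOp (fun F => -(A F)) := by
  refine dop_congr (fun F => ?_) (dop_smul (-1) hA)
  simp

theorem dop_sub {A B : S2 → S2} (hA : DOp A) (hB : DOp B) :
    DOp (fun F => A F - B F) := by
  refine dop_congr (fun F => ?_) (dop_add hA (dop_neg hB))
  simp [sub_eq_add_neg]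

theorem dop_finsum {ι : Type*} (u : Finset ι) (T : ι → S2 → S2)
    (h : ∀ i ∈ u, DOp (T i)) : DOp (fun F => ∑ i ∈ u, T i F) := by
  classical
  induction u using Finset.induction_on with
  | empty => exact dop_congr (fun F => by simp) dop_zero
  | @insert a u' hni ih =>
      refine dop_congr (fun F => Finset.sum_insert hni)
        (dop_add (h a (Finset.mem_insert_self a u'))
          (ih fun i hi => h i (Finset.mem_insert_of_mem hi)))

theorem dop_mulleft {A : S2 → S2} (b : S2) (hA : DOp A) :
    DOp (fun F => mul b (A F)) := by
  obtain ⟨s, c, hc⟩ := hA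
  refine ⟨s, fun p => mul b (c p), fun F => ?_⟩
  show mul b (A F) = _
  rw [hc, mul_sum_right]
  exact Finset.sum_congr rfl fun p _ => (mul_assoc' b (c p) (NF p F)).symm

theorem dop_eta1comp {A : S2 → S2} (hA : DOp A) : DOp (fun F => eta1 (A F)) := by
  obtain ⟨s, c, hc⟩ := hA
  have key : ∀ F, eta1 (A F) =
      ∑ p ∈ s, (mul (eta1 (c p)) (NF p F) + mul (pr (c p)) (NF (p.1 + 1, p.2) F)) := by
    intro F
    rw [hc, eta1_sum]
    exact Finset.sum_congr rfl fun p _ => by rw [eta1_mul, eta1_NF]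
  exact dop_congr key (dop_finsum s _ fun p _ => dop_add (dop_gen _ p) (dop_gen _ _))

theorem dop_eta2comp {A : S2 → S2} (hA : DOp A) : DOp (fun F => eta2 (A F)) := by
  obtain ⟨s, c, hc⟩ := hA
  have key : ∀ F, eta2 (A F) =
      ∑ p ∈ s, (mul (eta2 (c p)) (NF p F)
        + mul (((-1 : ℝ) ^ p.1) • pr (c p)) (NF (p.1, p.2 + 1) F)) := by
    intro F
    rw [hc, eta2_sum]
    refine Finset.sum_congr rfl fun p _ => ?_
    rw [eta2_mul, eta2_NF, mul_smul_right, mul_smul_left]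
  exact dop_congr key (dop_finsum s _ fun p _ => dop_add (dop_gen _ p) (dop_gen _ _))

theorem dop_eta1iter {A : S2 → S2} (n : ℕ) (hA : DOp A) :
    DOp (fun F => eta1^[n] (A F)) := by
  induction n with
  | zero => exact dop_congr (fun F => rfl) hA
  | succ n ih =>
      exact dop_congr (fun F => Function.iterate_succ_apply' eta1 n (A F)) (dop_eta1comp ih)

theorem dop_eta2iter {A : S2 → S2} (n : ℕ) (hA : DOp A) :
    DOp (fun F => eta2^[n] (A F)) := by
  induction n with
  | zero => exact dop_congr (fun F => rfl) hA
  | succ n ih =>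
      exact dop_congr (fun F => Function.iterate_succ_apply' eta2 n (A F)) (dop_eta2comp ih)

theorem dop_comp {A B : S2 → S2} (hA : DOp A) (hB : DOp B) :
    DOp (fun F => A (B F)) := by
  obtain ⟨s, c, hc⟩ := hA
  refine dop_congr (fun F => hc (B F)) (dop_finsum s _ fun p _ => ?_)
  exact dop_mulleft (c p) (dop_eta1iter p.1 (dop_eta2iter p.2 hB))

theorem dop_additive {A : S2 → S2} (hA : DOp A) (F G : S2) :
    A (F + G) = A F + A G := by
  obtain ⟨s, c, hc⟩ := hA
  rw [hc, hc, hc, ← Finset.sum_add_distrib]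
  exact Finset.sum_congr rfl fun p _ => by rw [NF_add, mul_add_right]

theorem dop_map_zero {A : S2 → S2} (hA : DOp A) : A 0 = 0 := by
  obtain ⟨s, c, hc⟩ := hA
  rw [hc]
  exact Finset.sum_eq_zero fun p _ => by rw [NF_zero, mul_zero_right]

end S2
namespace S2

open Finset in
theorem sum_fin_eq (N : ℕ) (f : ℕ → ℕ → S2) :
    (∑ l : Fin (N + 1), ∑ m : Fin (N + 1), f l m)
      = ∑ p ∈ (range (N + 1)) ×ˢ (range (N + 1)), f p.1 p.2 := by
  calc ∑ l : Fin (N + 1), ∑ m : Fin (N + 1), f l m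
      = ∑ l : Fin (N + 1), ∑ m ∈ range (N + 1), f l m :=
        Finset.sum_congr rfl fun l _ => Fin.sum_univ_eq_sum_range (fun m => f l m) (N + 1)
    _ = ∑ l ∈ range (N + 1), ∑ m ∈ range (N + 1), f l m :=
        Fin.sum_univ_eq_sum_range (fun l => ∑ m ∈ range (N + 1), f l m) (N + 1)
    _ = ∑ p ∈ (range (N + 1)) ×ˢ (range (N + 1)), f p.1 p.2 := (Finset.sum_product (range (N + 1)) (range (N + 1)) (fun p => f p.1 p.2)).symm

theorem isDiffOp_iff_dop (A : S2 → S2) : IsDiffOp A ↔ DOp A := by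
  constructor
  · rintro ⟨N, a, ha⟩
    classical
    refine ⟨(Finset.range (N + 1)) ×ˢ (Finset.range (N + 1)),
      fun p => if h : p.1 < N + 1 ∧ p.2 < N + 1 then a ⟨p.1, h.1⟩ ⟨p.2, h.2⟩ else 0,
      fun F => ?_⟩
    rw [ha F]
    rw [show (∑ l : Fin (N+1), ∑ m : Fin (N+1), mul (a l m) (eta1^[(l:ℕ)] (eta2^[(m:ℕ)] F)))
        = ∑ l : Fin (N+1), ∑ m : Fin (N+1),
            mul (if h : (l:ℕ) < N + 1 ∧ (m:ℕ) < N + 1 then a ⟨(l:ℕ), h.1⟩ ⟨(m:ℕ), h.2⟩ else 0)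
              (NF ((l:ℕ), (m:ℕ)) F) from ?_]
    · exact sum_fin_eq N fun l m =>
        mul (if h : l < N + 1 ∧ m < N + 1 then a ⟨l, h.1⟩ ⟨m, h.2⟩ else 0) (NF (l, m) F)
    · refine Finset.sum_congr rfl fun l _ => Finset.sum_congr rfl fun m _ => ?_
      rw [dif_pos ⟨l.isLt, m.isLt⟩]
      rfl
  · rintro ⟨s, c, hc⟩
    classical
    set N : ℕ := s.sup fun p => max p.1 p.2 with hN
    have hsub : s ⊆ (Finset.range (N + 1)) ×ˢ (Finset.range (N + 1)) := by
      intro p hp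
      have h1 : p.1 ≤ N := le_trans (le_max_left _ _) (Finset.le_sup (f := fun p : ℕ × ℕ => max p.1 p.2) hp)
      have h2 : p.2 ≤ N := le_trans (le_max_right _ _) (Finset.le_sup (f := fun p : ℕ × ℕ => max p.1 p.2) hp)
      exact Finset.mem_product.mpr ⟨Finset.mem_range.mpr (Nat.lt_succ_of_le h1),
        Finset.mem_range.mpr (Nat.lt_succ_of_le h2)⟩
    refine ⟨N, fun l m => if ((l : ℕ), (m : ℕ)) ∈ s then c ((l : ℕ), (m : ℕ)) else 0,
      fun F => ?_⟩
    rw [hc F]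
    rw [show (∑ l : Fin (N+1), ∑ m : Fin (N+1),
        mul (if ((l:ℕ), (m:ℕ)) ∈ s then c ((l:ℕ), (m:ℕ)) else 0)
          (eta1^[(l:ℕ)] (eta2^[(m:ℕ)] F)))
        = ∑ p ∈ (Finset.range (N + 1)) ×ˢ (Finset.range (N + 1)),
            mul (if p ∈ s then c p else 0) (NF p F) from ?_]
    · rw [← Finset.sum_subset hsub (fun p _ hpu => by rw [if_neg hpu, mul_zero_left])]
      exact Finset.sum_congr rfl fun p hp => by rw [if_pos hp]
    · exact sum_fin_eq N fun l m => mul (if (l, m) ∈ s then c (l, m) else 0) (NF (l, m) F)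

end S2
namespace S2

/-! ### Projections onto `E` and `θ₂E` -/

/-- Projection onto `θ₂E`. -/
def P1op (F : S2) : S2 := mul θ2 (eta2 F)
/-- Projection onto `E`. -/
def P0op (F : S2) : S2 := F - P1op F

@[simp] theorem P1op_apply0 (F : S2) : P1op F 0 = 0 := by simp [P1op]
@[simp] theorem P1op_apply1 (F : S2) : P1op F 1 = 0 := by simp [P1op]
@[simp] theorem P1op_apply2 (F : S2) : P1op F 2 = F 2 := by simp [P1op]
@[simp] theorem P1op_apply3 (F : S2) : P1op F 3 = F 3 := by simp [P1op]
@[simp] theorem P0op_apply0 (F : S2) : P0op F 0 = F 0 := by simp [P0op]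
@[simp] theorem P0op_apply1 (F : S2) : P0op F 1 = F 1 := by simp [P0op]
@[simp] theorem P0op_apply2 (F : S2) : P0op F 2 = 0 := by simp [P0op]
@[simp] theorem P0op_apply3 (F : S2) : P0op F 3 = 0 := by simp [P0op]

theorem NF01 (F : S2) : NF (0, 1) F = eta2 F := by simp [NF]
theorem NF10 (F : S2) : NF (1, 0) F = eta1 F := by simp [NF]
theorem NF00 (F : S2) : NF (0, 0) F = F := by simp [NF]
theorem NF02 (F : S2) : NF (0, 2) F = eta2 (eta2 F) := by
  simp [NF]
theorem NF11 (F : S2) : NF (1, 1) F = eta1 (eta2 F) := by simp [NF]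
theorem NF03 (F : S2) : NF (0, 3) F = eta2 (eta2 (eta2 F)) := by
  simp [NF, Function.iterate_succ_apply']
theorem NF12 (F : S2) : NF (1, 2) F = eta1 (eta2 (eta2 F)) := by simp [NF]

theorem dop_P1op : DOp P1op :=
  dop_congr (fun F => by rw [P1op, NF01]) (dop_gen θ2 (0, 1))

theorem dop_P0op : DOp P0op :=
  dop_congr (fun F => rfl) (dop_sub dop_id dop_P1op)

/-- The scalar-extraction operator `F ↦ f₁` (placed in slot 0). -/
def Ext1op (F : S2) : S2 :=
  eta1 F - mul θ1 (eta2 (eta2 F)) + mul θ2 (eta1 (eta2 F)) + mul fθ12 (eta2 (eta2 (eta2 F)))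

/-- The scalar-extraction operator `F ↦ f₂` (placed in slot 0). -/
def Ext2op (F : S2) : S2 :=
  eta2 F - mul θ1 (eta1 (eta2 F)) - mul θ2 (eta2 (eta2 F)) - mul fθ12 (eta1 (eta2 (eta2 F)))

theorem Ext1op_eq (F : S2) : Ext1op F = ![F 1, 0, 0, 0] := by
  apply ext4 <;> (simp [Ext1op]; try ring)

theorem Ext2op_eq (F : S2) : Ext2op F = ![F 2, 0, 0, 0] := by
  apply ext4 <;> (simp [Ext2op]; try ring)

theorem dop_Ext1op : DOp Ext1op := by
  refine dop_congr (fun F => ?_)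
    (dop_add (dop_add (dop_sub (dop_gen one2 (1,0)) (dop_gen θ1 (0,2)))
      (dop_gen θ2 (1,1))) (dop_gen fθ12 (0,3)))
  rw [Ext1op, NF10, NF02, NF11, NF03, mul_one_left]

theorem dop_Ext2op : DOp Ext2op := by
  refine dop_congr (fun F => ?_)
    (dop_sub (dop_sub (dop_sub (dop_gen one2 (0,1)) (dop_gen θ1 (1,1)))
      (dop_gen θ2 (0,2))) (dop_gen fθ12 (1,2)))
  rw [Ext2op, NF01, NF11, NF02, NF12, mul_one_left]

theorem oddPart_eq (F : S2) : oddPart F = mul θ1 (Ext1op F) + mul θ2 (Ext2op F) := by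
  rw [Ext1op_eq, Ext2op_eq]
  apply ext4 <;> (rw [add_apply]; simp [mul])

theorem dop_oddPart : DOp oddPart :=
  dop_congr oddPart_eq (dop_add (dop_mulleft θ1 dop_Ext1op) (dop_mulleft θ2 dop_Ext2op))

theorem dop_evenPart : DOp evenPart := by
  refine dop_congr (fun F => ?_) (dop_sub dop_id dop_oddPart)
  apply ext4 <;> simp

/-! ### Membership in `E` and `θ₂E` -/

theorem mem_Esub_iff (F : S2) : F ∈ Esub ↔ F 2 = 0 ∧ F 3 = 0 := by
  constructor
  · intro h
    have h0 := congrFun (h : d2 F = 0) 0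
    have h1 := congrFun (h : d2 F = 0) 1
    simp only [d2_apply0, d2_apply1, zero_apply, neg_eq_zero] at h0 h1
    exact ⟨h0, h1⟩
  · rintro ⟨h2, h3⟩
    show d2 F = 0
    apply ext4 <;> simp [h2, h3]

theorem mem_θ2Esub_iff (F : S2) : F ∈ θ2Esub ↔ F 0 = 0 ∧ F 1 = 0 := by
  constructor
  · rintro ⟨G, _, rfl⟩
    constructor <;> simp
  · rintro ⟨h0, h1⟩
    refine ⟨d2 F, ?_, ?_⟩
    · rw [mem_Esub_iff]; simp
    · apply ext4 <;> simp [h0, h1]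

theorem osp12_comp {H : S2} (h : H ∈ osp12) : H 2 = 0 ∧ H 3 = 0 := by
  induction h using Submodule.span_induction with
  | mem x hx =>
      rcases hx with rfl | rfl | rfl | rfl | rfl <;>
        exact ⟨rfl, rfl⟩
  | zero => exact ⟨rfl, rfl⟩
  | add x y _ _ hx hy => exact ⟨by simp [hx.1, hy.1], by simp [hx.2, hy.2]⟩
  | smul r x _ hx => exact ⟨by simp [hx.1], by simp [hx.2]⟩

end S2
namespace S2

theorem dx_eq_NF (G : S2) : dx G = -(NF (0, 2) G) := by
  rw [NF02, eta2_eta2, neg_neg]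

theorem dop_Lact (lam : ℝ) (H : S2) : DOp (Lact lam H) := by
  have h1 : DOp (fun G => mul H (dx G)) := by
    refine dop_congr (fun G => ?_) (dop_neg (dop_gen H (0, 2)))
    rw [dx_eq_NF, mul_neg_right]
  have e1 : ∀ (c : S2), DOp (fun G => mul c (eta1 G)) := fun c =>
    dop_congr (fun G => by rw [NF10]) (dop_gen c (1, 0))
  have e2 : ∀ (c : S2), DOp (fun G => mul c (eta2 G)) := fun c =>
    dop_congr (fun G => by rw [NF01]) (dop_gen c (0, 1))
  have e0 : ∀ (c : S2), DOp (fun G => mul c G) := fun c =>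
    dop_congr (fun G => by rw [NF00]) (dop_gen c (0, 0))
  exact dop_congr (fun G => rfl)
    (dop_add
      (dop_add
        (dop_sub h1
          (dop_smul (1/2) (dop_add (e1 (eta1 (evenPart H))) (e2 (eta2 (evenPart H))))))
        (dop_smul (1/2) (dop_add (e1 (eta1 (oddPart H))) (e2 (eta2 (oddPart H))))))
      (dop_smul lam (e0 (dx H))))

theorem Lact_comp23 (lam : ℝ) {H F : S2} (h2 : H 2 = 0) (h3 : H 3 = 0)
    (f2 : F 2 = 0) (f3 : F 3 = 0) :
    Lact lam H F 2 = 0 ∧ Lact lam H F 3 = 0 := by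
  constructor <;> simp [Lact, X, h2, h3, f2, f3]

theorem Lact_comp01 (lam : ℝ) {H F : S2} (h2 : H 2 = 0) (h3 : H 3 = 0)
    (f0 : F 0 = 0) (f1 : F 1 = 0) :
    Lact lam H F 0 = 0 ∧ Lact lam H F 1 = 0 := by
  constructor <;> simp [Lact, X, h2, h3, f0, f1]

theorem Lact_pres (lam : ℝ) {H : S2} (h2 : H 2 = 0) (h3 : H 3 = 0)
    {W : Submodule ℝ S2} (hW : W = Esub ∨ W = θ2Esub) :
    ∀ F ∈ W, Lact lam H F ∈ W := by
  rcases hW with rfl | rfl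
  · intro F hF
    rw [mem_Esub_iff] at hF ⊢
    exact Lact_comp23 lam h2 h3 hF.1 hF.2
  · intro F hF
    rw [mem_θ2Esub_iff] at hF ⊢
    exact Lact_comp01 lam h2 h3 hF.1 hF.2

theorem evenPart_pres {W : Submodule ℝ S2} (hW : W = Esub ∨ W = θ2Esub) :
    ∀ F ∈ W, evenPart F ∈ W := by
  rcases hW with rfl | rfl
  · intro F hF
    rw [mem_Esub_iff] at hF ⊢
    simp [hF.2]
  · intro F hF
    rw [mem_θ2Esub_iff] at hF ⊢
    simp [hF.1]

theorem oddPart_pres {W : Submodule ℝ S2} (hW : W = Esub ∨ W = θ2Esub) :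
    ∀ F ∈ W, oddPart F ∈ W := by
  rcases hW with rfl | rfl
  · intro F hF
    rw [mem_Esub_iff] at hF ⊢
    simp [hF.1]
  · intro F hF
    rw [mem_θ2Esub_iff] at hF ⊢
    simp [hF.2]

theorem evenPart_zero : evenPart (0 : S2) = 0 := by apply ext4 <;> simp
theorem oddPart_zero : oddPart (0 : S2) = 0 := by apply ext4 <;> simp

theorem dop_opEven {A : S2 → S2} (hA : DOp A) : DOp (opEven A) :=
  dop_congr (fun F => rfl)
    (dop_add (dop_comp dop_evenPart (dop_comp hA dop_evenPart))
      (dop_comp dop_oddPart (dop_comp hA dop_oddPart)))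

theorem dop_opOdd {A : S2 → S2} (hA : DOp A) : DOp (opOdd A) :=
  dop_congr (fun F => rfl)
    (dop_add (dop_comp dop_oddPart (dop_comp hA dop_evenPart))
      (dop_comp dop_evenPart (dop_comp hA dop_oddPart)))

theorem main2 (lam mu : ℝ) (pH : Bool) {H : S2} (h2 : H 2 = 0) (h3 : H 3 = 0)
    {U V U' : Submodule ℝ S2} (hU : U = Esub ∨ U = θ2Esub)
    (hV : V = Esub ∨ V = θ2Esub) (hU' : U' = Esub ∨ U' = θ2Esub)
    {A : S2 → S2} (hdop : DOp A) (hmap : ∀ F ∈ U, A F ∈ V)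
    (hkill : ∀ F ∈ U', A F = 0) :
    DOp (opActG lam mu pH H A) ∧ (∀ F ∈ U, opActG lam mu pH H A F ∈ V) ∧
      (∀ F ∈ U', opActG lam mu pH H A F = 0) := by
  refine ⟨?_, ?_, ?_⟩
  · exact dop_congr (fun F => rfl)
      (dop_sub (dop_comp (dop_Lact mu H) hdop)
        (dop_add (dop_comp (dop_opEven hdop) (dop_Lact lam H))
          (dop_smul (sgn pH) (dop_comp (dop_opOdd hdop) (dop_Lact lam H)))))
  · intro F hF
    have hLF : Lact lam H F ∈ U := Lact_pres lam h2 h3 hU F hF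
    have t1 : Lact mu H (A F) ∈ V := Lact_pres mu h2 h3 hV _ (hmap F hF)
    have t2 : opEven A (Lact lam H F) ∈ V :=
      V.add_mem
        (evenPart_pres hV _ (hmap _ (evenPart_pres hU _ hLF)))
        (oddPart_pres hV _ (hmap _ (oddPart_pres hU _ hLF)))
    have t3 : opOdd A (Lact lam H F) ∈ V :=
      V.add_mem
        (oddPart_pres hV _ (hmap _ (evenPart_pres hU _ hLF)))
        (evenPart_pres hV _ (hmap _ (oddPart_pres hU _ hLF)))
    exact V.sub_mem t1 (V.add_mem t2 (V.smul_mem _ t3))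
  · intro F hF
    have hLF : Lact lam H F ∈ U' := Lact_pres lam h2 h3 hU' F hF
    have t1 : Lact mu H (A F) = 0 := by
      rw [hkill F hF]; exact dop_map_zero (dop_Lact mu H)
    have t2 : opEven A (Lact lam H F) = 0 := by
      rw [opEven, hkill _ (evenPart_pres hU' _ hLF), hkill _ (oddPart_pres hU' _ hLF),
        evenPart_zero, oddPart_zero, add_zero]
    have t3 : opOdd A (Lact lam H F) = 0 := by
      rw [opOdd, hkill _ (evenPart_pres hU' _ hLF), hkill _ (oddPart_pres hU' _ hLF),
        evenPart_zero, oddPart_zero, add_zero]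
    show Lact mu H (A F) - (opEven A (Lact lam H F) + sgn pH • opOdd A (Lact lam H F)) = 0
    rw [t1, t2, t3, smul_zero, add_zero, sub_zero]

end S2
namespace S2

theorem P0op_mem_Esub (F : S2) : P0op F ∈ Esub :=
  (mem_Esub_iff _).mpr ⟨by simp, by simp⟩

theorem P1op_mem_θ2Esub (F : S2) : P1op F ∈ θ2Esub :=
  (mem_θ2Esub_iff _).mpr ⟨by simp, by simp⟩

theorem P0op_of_mem_O {F : S2} (h : F ∈ θ2Esub) : P0op F = 0 := by
  obtain ⟨h0, h1⟩ := (mem_θ2Esub_iff F).mp h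
  apply ext4 <;> simp [h0, h1]

theorem P1op_of_mem_E {F : S2} (h : F ∈ Esub) : P1op F = 0 := by
  obtain ⟨h2, h3⟩ := (mem_Esub_iff F).mp h
  apply ext4 <;> simp [h2, h3]

theorem P0add (F : S2) : P0op F + P1op F = F := by
  apply ext4 <;> simp

theorem decompP0 {X Y : S2} (hX : X ∈ Esub) (hY : Y ∈ θ2Esub) :
    P0op (X + Y) = X := by
  obtain ⟨x2, x3⟩ := (mem_Esub_iff X).mp hX
  obtain ⟨y0, y1⟩ := (mem_θ2Esub_iff Y).mp hY
  apply ext4 <;> simp [x2, x3, y0, y1]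

theorem decompP1 {X Y : S2} (hX : X ∈ Esub) (hY : Y ∈ θ2Esub) :
    P1op (X + Y) = Y := by
  obtain ⟨x2, x3⟩ := (mem_Esub_iff X).mp hX
  obtain ⟨y0, y1⟩ := (mem_θ2Esub_iff Y).mp hY
  apply ext4 <;> simp [x2, x3, y0, y1]

end S2

open S2 in
theorem diffOp_decomposition' (lam mu : ℝ) :
    (∀ A : S2 → S2, IsDiffOp A →
      ∃! q : (S2 → S2) × (S2 → S2) × (S2 → S2) × (S2 → S2),
        InD 0 0 q.1 ∧ InD 1 1 q.2.1 ∧ InD 0 1 q.2.2.1 ∧ InD 1 0 q.2.2.2 ∧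
          A = q.1 + q.2.1 + q.2.2.1 + q.2.2.2) ∧
    (∀ (i j : Fin 2) (A : S2 → S2), InD i j A →
      ∀ H ∈ osp12, ∀ pH : Bool, HasParity H pH →
        InD i j (opActG lam mu pH H A)) := by
  have if0 : (if (0 : Fin 2) = 0 then Esub else θ2Esub) = Esub := if_pos rfl
  have if1 : (if (1 : Fin 2) = 0 then Esub else θ2Esub) = θ2Esub := if_neg (by decide)
  have if0' : (if (0 : Fin 2) = 0 then θ2Esub else Esub) = θ2Esub := if_pos rfl
  have if1' : (if (1 : Fin 2) = 0 then θ2Esub else Esub) = Esub := if_neg (by decide)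
  constructor
  · intro A hA
    have hdopA : DOp A := (isDiffOp_iff_dop A).mp hA
    have hAadd := dop_additive hdopA
    refine ⟨(fun F => P0op (A (P0op F)), fun F => P1op (A (P1op F)),
      fun F => P1op (A (P0op F)), fun F => P0op (A (P1op F))), ⟨?_, ?_, ?_, ?_, ?_⟩, ?_⟩ <;>
      dsimp only
    · refine ⟨(isDiffOp_iff_dop _).mpr
        (dop_comp dop_P0op (dop_comp hdopA dop_P0op)), ?_, ?_⟩
      · rw [if0]; intro F _; exact P0op_mem_Esub _
      · rw [if0']; intro F hF
        show P0op (A (P0op F)) = 0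
        rw [P0op_of_mem_O hF, dop_map_zero hdopA, P0op_of_mem_O θ2Esub.zero_mem]
    · refine ⟨(isDiffOp_iff_dop _).mpr
        (dop_comp dop_P1op (dop_comp hdopA dop_P1op)), ?_, ?_⟩
      · rw [if1]; intro F _; exact P1op_mem_θ2Esub _
      · rw [if1']; intro F hF
        show P1op (A (P1op F)) = 0
        rw [P1op_of_mem_E hF, dop_map_zero hdopA, P1op_of_mem_E Esub.zero_mem]
    · refine ⟨(isDiffOp_iff_dop _).mpr
        (dop_comp dop_P1op (dop_comp hdopA dop_P0op)), ?_, ?_⟩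
      · rw [if0, if1]; intro F _; exact P1op_mem_θ2Esub _
      · rw [if0']; intro F hF
        show P1op (A (P0op F)) = 0
        rw [P0op_of_mem_O hF, dop_map_zero hdopA, P1op_of_mem_E Esub.zero_mem]
    · refine ⟨(isDiffOp_iff_dop _).mpr
        (dop_comp dop_P0op (dop_comp hdopA dop_P1op)), ?_, ?_⟩
      · rw [if1, if0]; intro F _; exact P0op_mem_Esub _
      · rw [if1']; intro F hF
        show P0op (A (P1op F)) = 0
        rw [P1op_of_mem_E hF, dop_map_zero hdopA, P0op_of_mem_O θ2Esub.zero_mem]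
    · funext F
      have h1 : A F = A (P0op F) + A (P1op F) := by
        rw [← hAadd, P0add]
      have h2 : A (P0op F) = P0op (A (P0op F)) + P1op (A (P0op F)) := (P0add _).symm
      have h3 : A (P1op F) = P0op (A (P1op F)) + P1op (A (P1op F)) := (P0add _).symm
      show A F = _
      simp only [Pi.add_apply]
      rw [h1]
      conv_lhs => rw [h2, h3]
      abel
    · rintro ⟨B1, B2, B3, B4⟩ ⟨hI1, hI2, hI3, hI4, heq⟩
      obtain ⟨hd1, hm1, hk1⟩ := hI1
      obtain ⟨hd2, hm2, hk2⟩ := hI2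
      obtain ⟨hd3, hm3, hk3⟩ := hI3
      obtain ⟨hd4, hm4, hk4⟩ := hI4
      dsimp only at heq hd1 hm1 hk1 hd2 hm2 hk2 hd3 hm3 hk3 hd4 hm4 hk4
      rw [if0] at hm1 hm3
      rw [if1] at hm2 hm3 hm4
      rw [if0] at hm4
      rw [if0'] at hk1 hk3
      rw [if1'] at hk2 hk4
      have add1 := dop_additive ((isDiffOp_iff_dop _).mp hd1)
      have add2 := dop_additive ((isDiffOp_iff_dop _).mp hd2)
      have add3 := dop_additive ((isDiffOp_iff_dop _).mp hd3)
      have add4 := dop_additive ((isDiffOp_iff_dop _).mp hd4)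
      have hAsplit : ∀ G : S2, A G = B1 G + B2 G + B3 G + B4 G := fun G => by
        rw [heq]; rfl
      have hE : ∀ G : S2, A (P0op G) = B1 (P0op G) + B3 (P0op G) := by
        intro G
        rw [hAsplit, hk2 _ (P0op_mem_Esub G), hk4 _ (P0op_mem_Esub G)]
        abel
      have hO : ∀ G : S2, A (P1op G) = B2 (P1op G) + B4 (P1op G) := by
        intro G
        rw [hAsplit, hk1 _ (P1op_mem_θ2Esub G), hk3 _ (P1op_mem_θ2Esub G)]
        abel
      have r1 : ∀ G : S2, B1 G = P0op (A (P0op G)) := by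
        intro G
        conv_lhs => rw [← P0add G]
        rw [add1, hk1 _ (P1op_mem_θ2Esub G), add_zero, hE,
          decompP0 (hm1 _ (P0op_mem_Esub G)) (hm3 _ (P0op_mem_Esub G))]
      have r3 : ∀ G : S2, B3 G = P1op (A (P0op G)) := by
        intro G
        conv_lhs => rw [← P0add G]
        rw [add3, hk3 _ (P1op_mem_θ2Esub G), add_zero, hE,
          decompP1 (hm1 _ (P0op_mem_Esub G)) (hm3 _ (P0op_mem_Esub G))]
      have r2 : ∀ G : S2, B2 G = P1op (A (P1op G)) := by
        intro G
        conv_lhs => rw [← P0add G]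
        rw [add2, hk2 _ (P0op_mem_Esub G), zero_add, hO, add_comm (B2 (P1op G)),
          decompP1 (hm4 _ (P1op_mem_θ2Esub G)) (hm2 _ (P1op_mem_θ2Esub G))]
      have r4 : ∀ G : S2, B4 G = P0op (A (P1op G)) := by
        intro G
        conv_lhs => rw [← P0add G]
        rw [add4, hk4 _ (P0op_mem_Esub G), zero_add, hO, add_comm (B2 (P1op G)),
          decompP0 (hm4 _ (P1op_mem_θ2Esub G)) (hm2 _ (P1op_mem_θ2Esub G))]
      simp only [Prod.mk.injEq]
      exact ⟨funext r1, funext r2, funext r3, funext r4⟩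
  · intro i j A hInD H hH pH _
    obtain ⟨hd, hm, hk⟩ := hInD
    obtain ⟨h2, h3⟩ := osp12_comp hH
    have hdop := (isDiffOp_iff_dop A).mp hd
    have hU : (if i = 0 then Esub else θ2Esub) = Esub ∨
        (if i = 0 then Esub else θ2Esub) = θ2Esub := by
      by_cases hi : i = 0
      · exact Or.inl (if_pos hi)
      · exact Or.inr (if_neg hi)
    have hV : (if j = 0 then Esub else θ2Esub) = Esub ∨
        (if j = 0 then Esub else θ2Esub) = θ2Esub := by
      by_cases hj : j = 0
      · exact Or.inl (if_pos hj)
      · exact Or.inr (if_neg hj)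
    have hU' : (if i = 0 then θ2Esub else Esub) = Esub ∨
        (if i = 0 then θ2Esub else Esub) = θ2Esub := by
      by_cases hi : i = 0
      · exact Or.inr (if_pos hi)
      · exact Or.inl (if_neg hi)
    obtain ⟨d, m, k⟩ := main2 lam mu pH h2 h3 hU hV hU' hdop hm hk
    exact ⟨(isDiffOp_iff_dop _).mpr d, m, k⟩

open S2 in
/-- `D²_{λ,μ} = D₁₁ ⊕ D₂₂ ⊕ D₁₂ ⊕ D₂₁`: every differential operator decomposes uniquely
into four parts, and each subspace `D_{ij}` is invariant under the `osp(1|2)`-action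
`X_H·A = L^μ_{X_H}∘A − (−1)^{|H||A|} A∘L^λ_{X_H}`.  (This realizes the decomposition
`D²_{λ,μ} ≅ D¹_{λ,μ} ⊕ D¹_{λ+1/2,μ+1/2} ⊕ Π(D¹_{λ,μ+1/2} ⊕ D¹_{λ+1/2,μ})`.) -/
theorem diffOp_decomposition (lam mu : ℝ) :
    (∀ A : S2 → S2, IsDiffOp A →
      ∃! q : (S2 → S2) × (S2 → S2) × (S2 → S2) × (S2 → S2),
        InD 0 0 q.1 ∧ InD 1 1 q.2.1 ∧ InD 0 1 q.2.2.1 ∧ InD 1 0 q.2.2.2 ∧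
          A = q.1 + q.2.1 + q.2.2.1 + q.2.2.2) ∧
    (∀ (i j : Fin 2) (A : S2 → S2), InD i j A →
      ∀ H ∈ osp12, ∀ pH : Bool, HasParity H pH →
        InD i j (opActG lam mu pH H A)) := by
  exact diffOp_decomposition' lam mu
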